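/- Let X be a complex normed space and let T1, T2 be commuting contractions on X such that each function A_{Ti}(x) = (‖x‖² − ‖Ti x‖²)^{1/2} defines a norm on X (i = 1, 2). Let X1 and X2 be complex normed spaces together with linear bijections j_i : X → X_i satisfying ‖j_i x‖_{X_i} = A_{Ti}(x) for all x ∈ X, and consider the subspaces M̂1 = { (j_1(T2 x), j_2 x) : x ∈ X } and M̂2 = { (j_1 x, j_2(T1 x)) : x ∈ X } of X1 ⊕₂ X2. Suppose there exist subspaces Y1, Y2 of X1 ⊕₂ X2 and a surjective linear isometry between Y1 and Y2 such that X1 ⊕₂ X2 is the internal direct 2-sum of M̂1 and Y1 and also of M̂2 and Y2 (i.e. every element decomposes uniquely as a sum with the squared norm splitting accordingly). Then there exists a surjective linear isometry S on X1 ⊕₂ X2 with S(M̂1) = M̂2, satisfying S(j_1(T2 x), j_2 x) = (j_1 x, j_2(T1 x)) for all x ∈ X; consequently (T1, T2) dilates to a commuting pair of isometries on the normed space X ⊕₂ ℓ²(ℕ, X1 ⊕₂ X2). -/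

import Mathlib

set_option linter.unusedSectionVars false
set_option maxHeartbeats 1000000
open scoped ENNReal

private lemma sq_norm_inj {a b : ℝ} (ha : 0 ≤ a) (hb : 0 ≤ b) (h : a ^ 2 = b ^ 2) : a = b := by
  nlinarith [sq_nonneg (a - b), sq_nonneg (a + b)]

/-- Lemma 2.2 (iii): glueing an isometry from two internal direct 2-sum decompositions. -/
theorem exists_isometry_of_complements
    {K X : Type*} [NormedAddCommGroup K] [NormedSpace ℂ K]
    [AddCommGroup X] [Module ℂ X]
    (m1 m2 : X →ₗ[ℂ] K)
    (hnormeq : ∀ x, ‖m1 x‖ = ‖m2 x‖)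
    (Y1 Y2 : Submodule ℂ K) (U : Y1 ≃ₗᵢ[ℂ] Y2)
    (hdec1 : ∀ z : K, ∃! p : X × Y1, m1 p.1 + (p.2 : K) = z)
    (hnorm1 : ∀ (x : X) (y : Y1), ‖m1 x + (y : K)‖ ^ 2 = ‖m1 x‖ ^ 2 + ‖(y : K)‖ ^ 2)
    (hdec2 : ∀ z : K, ∃! p : X × Y2, m2 p.1 + (p.2 : K) = z)
    (hnorm2 : ∀ (x : X) (y : Y2), ‖m2 x + (y : K)‖ ^ 2 = ‖m2 x‖ ^ 2 + ‖(y : K)‖ ^ 2) :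
    ∃ S : K ≃ₗᵢ[ℂ] K, ∀ x : X, S (m1 x) = m2 x := by
  classical
  choose d1 hd1 hd1u using hdec1
  choose d2 hd2 hd2u using hdec2
  have d1_add : ∀ z w, d1 (z + w) = d1 z + d1 w := by
    intro z w
    refine (hd1u (z + w) (d1 z + d1 w) ?_).symm
    show m1 ((d1 z).1 + (d1 w).1) + (((d1 z).2 + (d1 w).2 : Y1) : K) = z + w
    rw [map_add, Submodule.coe_add]
    conv_rhs => rw [← hd1 z, ← hd1 w]
    abel
  have d1_smul : ∀ (c : ℂ) z, d1 (c • z) = c • d1 z := by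
    intro c z
    refine (hd1u (c • z) (c • d1 z) ?_).symm
    show m1 (c • (d1 z).1) + ((c • (d1 z).2 : Y1) : K) = c • z
    rw [map_smul, Submodule.coe_smul, ← smul_add]
    conv_rhs => rw [← hd1 z]
  have d2_add : ∀ z w, d2 (z + w) = d2 z + d2 w := by
    intro z w
    refine (hd2u (z + w) (d2 z + d2 w) ?_).symm
    show m2 ((d2 z).1 + (d2 w).1) + (((d2 z).2 + (d2 w).2 : Y2) : K) = z + w
    rw [map_add, Submodule.coe_add]
    conv_rhs => rw [← hd2 z, ← hd2 w]
    abel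
  have d2_smul : ∀ (c : ℂ) z, d2 (c • z) = c • d2 z := by
    intro c z
    refine (hd2u (c • z) (c • d2 z) ?_).symm
    show m2 (c • (d2 z).1) + ((c • (d2 z).2 : Y2) : K) = c • z
    rw [map_smul, Submodule.coe_smul, ← smul_add]
    conv_rhs => rw [← hd2 z]
  set Sfun : K → K := fun z => m2 (d1 z).1 + ((U (d1 z).2 : Y2) : K) with hSfun
  set Tfun : K → K := fun z => m1 (d2 z).1 + ((U.symm (d2 z).2 : Y1) : K) with hTfun
  have Sadd : ∀ z w, Sfun (z + w) = Sfun z + Sfun w := by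
    intro z w
    show m2 (d1 (z + w)).1 + ((U (d1 (z + w)).2 : Y2) : K) = _
    rw [d1_add]
    show m2 ((d1 z).1 + (d1 w).1) + (((U ((d1 z).2 + (d1 w).2) : Y2)) : K) = _
    rw [map_add, map_add, Submodule.coe_add]
    show _ = m2 (d1 z).1 + ((U (d1 z).2 : Y2) : K) + (m2 (d1 w).1 + ((U (d1 w).2 : Y2) : K))
    abel
  have Ssmul : ∀ (c : ℂ) z, Sfun (c • z) = c • Sfun z := by
    intro c z
    show m2 (d1 (c • z)).1 + ((U (d1 (c • z)).2 : Y2) : K) = _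
    rw [d1_smul]
    show m2 (c • (d1 z).1) + (((U (c • (d1 z).2) : Y2)) : K) = _
    rw [map_smul, map_smul, Submodule.coe_smul, ← smul_add]
  have Tadd : ∀ z w, Tfun (z + w) = Tfun z + Tfun w := by
    intro z w
    show m1 (d2 (z + w)).1 + ((U.symm (d2 (z + w)).2 : Y1) : K) = _
    rw [d2_add]
    show m1 ((d2 z).1 + (d2 w).1) + (((U.symm ((d2 z).2 + (d2 w).2) : Y1)) : K) = _
    rw [map_add, map_add, Submodule.coe_add]
    show _ = m1 (d2 z).1 + ((U.symm (d2 z).2 : Y1) : K) + (m1 (d2 w).1 + ((U.symm (d2 w).2 : Y1) : K))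
    abel
  have Tsmul : ∀ (c : ℂ) z, Tfun (c • z) = c • Tfun z := by
    intro c z
    show m1 (d2 (c • z)).1 + ((U.symm (d2 (c • z)).2 : Y1) : K) = _
    rw [d2_smul]
    show m1 (c • (d2 z).1) + (((U.symm (c • (d2 z).2) : Y1)) : K) = _
    rw [map_smul, map_smul, Submodule.coe_smul, ← smul_add]
  have hST : ∀ z, Tfun (Sfun z) = z := by
    intro z
    have h2 : d2 (Sfun z) = ((d1 z).1, U (d1 z).2) := (hd2u _ ((d1 z).1, U (d1 z).2) rfl).symm
    show m1 (d2 (Sfun z)).1 + ((U.symm (d2 (Sfun z)).2 : Y1) : K) = z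
    rw [h2]
    show m1 (d1 z).1 + ((U.symm (U (d1 z).2) : Y1) : K) = z
    rw [LinearIsometryEquiv.symm_apply_apply]
    exact hd1 z
  have hTS : ∀ z, Sfun (Tfun z) = z := by
    intro z
    have h1 : d1 (Tfun z) = ((d2 z).1, U.symm (d2 z).2) :=
      (hd1u _ ((d2 z).1, U.symm (d2 z).2) rfl).symm
    show m2 (d1 (Tfun z)).1 + ((U (d1 (Tfun z)).2 : Y2) : K) = z
    rw [h1]
    show m2 (d2 z).1 + ((U (U.symm (d2 z).2) : Y2) : K) = z
    rw [LinearIsometryEquiv.apply_symm_apply]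
    exact hd2 z
  have hnorm : ∀ z, ‖Sfun z‖ = ‖z‖ := by
    intro z
    refine sq_norm_inj (norm_nonneg _) (norm_nonneg _) ?_
    have h1 : ‖Sfun z‖ ^ 2 = ‖m2 (d1 z).1‖ ^ 2 + ‖((U (d1 z).2 : Y2) : K)‖ ^ 2 :=
      hnorm2 (d1 z).1 (U (d1 z).2)
    have h2 : ‖((U (d1 z).2 : Y2) : K)‖ = ‖(((d1 z).2 : Y1) : K)‖ := U.norm_map (d1 z).2
    have h3 : ‖z‖ ^ 2 = ‖m1 (d1 z).1‖ ^ 2 + ‖(((d1 z).2 : Y1) : K)‖ ^ 2 := by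
      conv_lhs => rw [← hd1 z]
      exact hnorm1 _ _
    rw [h1, h2, h3, hnormeq]
  refine ⟨{ toFun := Sfun
            invFun := Tfun
            map_add' := Sadd
            map_smul' := Ssmul
            left_inv := hST
            right_inv := hTS
            norm_map' := hnorm }, ?_⟩
  intro x
  have h0 : d1 (m1 x) = (x, 0) := (hd1u (m1 x) (x, 0) (by simp)).symm
  show m2 (d1 (m1 x)).1 + ((U (d1 (m1 x)).2 : Y2) : K) = m2 x
  rw [h0]
  show m2 x + ((U 0 : Y2) : K) = m2 x
  rw [map_zero]; simp



private lemma sq_norm_inj' {a b : ℝ} (ha : 0 ≤ a) (hb : 0 ≤ b) (h : a ^ 2 = b ^ 2) : a = b := by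
  nlinarith [sq_nonneg (a - b), sq_nonneg (a + b)]

section AndoDilAux

variable {K : Type*} [NormedAddCommGroup K] [NormedSpace ℂ K]

/-- Prepend an element to a sequence. -/
def consF (a : K) (f : ℕ → K) : ℕ → K := fun n => Nat.casesOn n a f

@[simp] lemma consF_zero (a : K) (f : ℕ → K) : consF a f 0 = a := rfl
@[simp] lemma consF_succ (a : K) (f : ℕ → K) (n : ℕ) : consF a f (n + 1) = f n := rfl

/-- Apply a map of pairs blockwise to consecutive pairs of a sequence. -/
def pairF (g : K × K → K × K) (f : ℕ → K) : ℕ → K := fun n =>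
  if Even n then (g (f n, f (n + 1))).1 else (g (f (n - 1), f n)).2

lemma pairF_even (g : K × K → K × K) (f : ℕ → K) (m : ℕ) :
    pairF g f (2 * m) = (g (f (2 * m), f (2 * m + 1))).1 :=
  if_pos (even_two_mul m)

lemma pairF_odd (g : K × K → K × K) (f : ℕ → K) (m : ℕ) :
    pairF g f (2 * m + 1) = (g (f (2 * m), f (2 * m + 1))).2 := by
  have hne : ¬ Even (2 * m + 1) := by
    simp [Nat.even_add_one, Nat.even_iff]
  show (if Even (2 * m + 1) then _ else _) = _
  rw [if_neg hne]
  simp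

lemma pairF_pair (g : K × K → K × K) (f : ℕ → K) (m : ℕ) :
    (pairF g f (2 * m), pairF g f (2 * m + 1)) = g (f (2 * m), f (2 * m + 1)) := by
  rw [pairF_even, pairF_odd]

lemma pairF_pairF (g g' : K × K → K × K) (hg'g : ∀ p, g' (g p) = p) (f : ℕ → K) :
    pairF g' (pairF g f) = f := by
  funext n
  obtain ⟨m, rfl | rfl⟩ : ∃ m, n = 2 * m ∨ n = 2 * m + 1 := ⟨n / 2, by omega⟩
  · rw [pairF_even, pairF_pair, hg'g]
  · rw [pairF_odd, pairF_pair, hg'g]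

lemma pairF_consF_consF (g : K × K → K × K) (a b : K) (f : ℕ → K) :
    pairF g (consF a (consF b f)) =
      consF (g (a, b)).1 (consF (g (a, b)).2 (pairF g f)) := by
  funext n
  set f' : ℕ → K := consF a (consF b f) with hf'
  have hstep : ∀ k, f' (k + 2) = f k := fun k => rfl
  rcases n with _ | n
  · show pairF g f' (2 * 0) = (g (a, b)).1
    rw [pairF_even]
    rfl
  rcases n with _ | n
  · show pairF g f' (2 * 0 + 1) = (g (a, b)).2
    rw [pairF_odd]
    rfl
  · show pairF g f' (n + 2) = pairF g f n
    obtain ⟨m, rfl | rfl⟩ : ∃ m, n = 2 * m ∨ n = 2 * m + 1 := ⟨n / 2, by omega⟩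
    · have h1 : f' (2 * (m + 1)) = f (2 * m) := by
        rw [show 2 * (m + 1) = 2 * m + 2 by ring]; exact hstep _
      have h2 : f' (2 * (m + 1) + 1) = f (2 * m + 1) := by
        rw [show 2 * (m + 1) + 1 = (2 * m + 1) + 2 by ring]; exact hstep _
      rw [show 2 * m + 2 = 2 * (m + 1) by ring, pairF_even, pairF_even, h1, h2]
    · have h1 : f' (2 * (m + 1)) = f (2 * m) := by
        rw [show 2 * (m + 1) = 2 * m + 2 by ring]; exact hstep _
      have h2 : f' (2 * (m + 1) + 1) = f (2 * m + 1) := by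
        rw [show 2 * (m + 1) + 1 = (2 * m + 1) + 2 by ring]; exact hstep _
      rw [show 2 * m + 1 + 2 = 2 * (m + 1) + 1 by ring, pairF_odd, pairF_odd, h1, h2]

/-- Summability and sum invariance under pairwise redistribution. -/
private lemma summable_pair_swap {u v : ℕ → ℝ} (hu : Summable u)
    (hu0 : ∀ n, 0 ≤ u n) (hv0 : ∀ n, 0 ≤ v n)
    (h : ∀ m, v (2 * m) + v (2 * m + 1) = u (2 * m) + u (2 * m + 1)) :
    Summable v ∧ ∑' n, v n = ∑' n, u n := by
  have hue : Summable fun m => u (2 * m) :=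
    hu.comp_injective (fun a b hab => by omega)
  have huo : Summable fun m => u (2 * m + 1) :=
    hu.comp_injective (fun a b hab => by omega)
  have hve : Summable fun m => v (2 * m) := by
    refine Summable.of_nonneg_of_le (fun m => hv0 _) (fun m => ?_) (hue.add huo)
    have := h m
    have := hv0 (2 * m + 1)
    linarith
  have hvo : Summable fun m => v (2 * m + 1) := by
    refine Summable.of_nonneg_of_le (fun m => hv0 _) (fun m => ?_) (hue.add huo)
    have := h m
    have := hv0 (2 * m)
    linarith
  refine ⟨hve.even_add_odd hvo, ?_⟩
  rw [← tsum_even_add_odd hve hvo, ← tsum_even_add_odd hue huo,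
    ← Summable.tsum_add hve hvo, ← Summable.tsum_add hue huo]
  exact tsum_congr h

private lemma rpow_two_eq (x : ℝ) : x ^ (2 : ℝ≥0∞).toReal = x ^ (2 : ℕ) := by
  rw [show (2 : ℝ≥0∞).toReal = ((2 : ℕ) : ℝ) by simp, Real.rpow_natCast]

lemma memℓp_of_sq {f : ℕ → K} (h : Summable fun n => ‖f n‖ ^ (2 : ℕ)) :
    Memℓp f (2 : ℝ≥0∞) := by
  apply memℓp_gen
  simpa only [rpow_two_eq] using h

lemma lp_summable_sq (f : lp (fun _ : ℕ => K) 2) :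
    Summable fun n => ‖f n‖ ^ (2 : ℕ) := by
  have := (lp.memℓp f).summable (p := 2) (by norm_num)
  simpa only [rpow_two_eq] using this

lemma lp_norm_sq (f : lp (fun _ : ℕ => K) 2) : ‖f‖ ^ (2 : ℕ) = ∑' n, ‖f n‖ ^ (2 : ℕ) := by
  have := lp.norm_rpow_eq_tsum (p := 2) (by norm_num) f
  simpa only [rpow_two_eq] using this

end AndoDilAux


section AndoDilLp

variable {K : Type*} [NormedAddCommGroup K] [NormedSpace ℂ K]

local notation "L" => lp (fun _ : ℕ => K) 2

/-- cons on `ℓ²`. -/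
def consl (a : K) (f : L) : L :=
  ⟨consF a ⇑f, memℓp_of_sq (by
    have hf := lp_summable_sq f
    have he : (fun n => ‖consF a (⇑f) n‖ ^ (2 : ℕ)) =
        consF (‖a‖ ^ (2 : ℕ)) (fun n => ‖f n‖ ^ (2 : ℕ)) := by
      funext n; cases n <;> rfl
    rw [he]
    exact (summable_nat_add_iff 1).mp hf)⟩

@[simp] lemma consl_coe (a : K) (f : L) : ⇑(consl a f) = consF a ⇑f := rfl

lemma consl_norm_sq (a : K) (f : L) :
    ‖consl a f‖ ^ (2 : ℕ) = ‖a‖ ^ (2 : ℕ) + ‖f‖ ^ (2 : ℕ) := by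
  rw [lp_norm_sq, lp_norm_sq]
  have he : (fun n => ‖(consl a f) n‖ ^ (2 : ℕ)) =
      consF (‖a‖ ^ (2 : ℕ)) (fun n => ‖f n‖ ^ (2 : ℕ)) := by
    funext n; cases n <;> rfl
  rw [he, tsum_eq_zero_add' (by
    exact (show Summable (fun n => ‖f n‖ ^ (2:ℕ)) from lp_summable_sq f))]
  rfl

lemma consl_add (a b : K) (f g : L) :
    consl (a + b) (f + g) = consl a f + consl b g := by
  apply lp.ext
  rw [lp.coeFn_add]
  funext n
  cases n <;> simp [lp.coeFn_add] <;> rfl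

lemma consl_smul (c : ℂ) (a : K) (f : L) :
    consl (c • a) (c • f) = c • consl a f := by
  apply lp.ext
  rw [lp.coeFn_smul]
  funext n
  cases n <;> simp [lp.coeFn_smul]

/-- blockwise pair map on `ℓ²`. -/
def pairl (g : K × K → K × K)
    (hg : ∀ p : K × K, ‖(g p).1‖ ^ (2:ℕ) + ‖(g p).2‖ ^ (2:ℕ) = ‖p.1‖ ^ (2:ℕ) + ‖p.2‖ ^ (2:ℕ))
    (f : L) : L :=
  ⟨pairF g ⇑f, memℓp_of_sq (by
    refine (summable_pair_swap (lp_summable_sq f) (fun n => by positivity)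
      (fun n => by positivity) (fun m => ?_)).1
    rw [pairF_even, pairF_odd]
    exact hg (f (2 * m), f (2 * m + 1)))⟩

@[simp] lemma pairl_coe (g : K × K → K × K) (hg : ∀ p : K × K,
      ‖(g p).1‖ ^ (2:ℕ) + ‖(g p).2‖ ^ (2:ℕ) = ‖p.1‖ ^ (2:ℕ) + ‖p.2‖ ^ (2:ℕ)) (f : L) :
    ⇑(pairl g hg f) = pairF g ⇑f := rfl

lemma pairl_norm (g : K × K → K × K) (hg : ∀ p : K × K,
      ‖(g p).1‖ ^ (2:ℕ) + ‖(g p).2‖ ^ (2:ℕ) = ‖p.1‖ ^ (2:ℕ) + ‖p.2‖ ^ (2:ℕ)) (f : L) :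
    ‖pairl g hg f‖ = ‖f‖ := by
  refine sq_norm_inj' (norm_nonneg _) (norm_nonneg _) ?_
  rw [lp_norm_sq, lp_norm_sq]
  refine (summable_pair_swap (lp_summable_sq f) (fun n => by positivity)
      (fun n => by positivity) (fun m => ?_)).2
  show ‖pairF g (⇑f) (2*m)‖ ^ (2:ℕ) + ‖pairF g (⇑f) (2*m+1)‖ ^ (2:ℕ) = _
  rw [pairF_even, pairF_odd]
  exact hg (f (2 * m), f (2 * m + 1))

lemma pairl_add (g : K × K →ₗ[ℂ] K × K) (hg : ∀ p : K × K,
      ‖(g p).1‖ ^ (2:ℕ) + ‖(g p).2‖ ^ (2:ℕ) = ‖p.1‖ ^ (2:ℕ) + ‖p.2‖ ^ (2:ℕ)) (f f' : L) :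
    pairl ⇑g hg (f + f') = pairl ⇑g hg f + pairl ⇑g hg f' := by
  apply lp.ext
  rw [lp.coeFn_add]
  funext n
  show pairF (⇑g) ⇑(f + f') n = pairF (⇑g) ⇑f n + pairF (⇑g) ⇑f' n
  unfold pairF
  split <;>
  · rw [lp.coeFn_add]
    simp only [Pi.add_apply]
    rw [show ((f : ∀ _ : ℕ, K) _ + (f' : ∀ _ : ℕ, K) _, (f : ∀ _ : ℕ, K) _ + (f' : ∀ _ : ℕ, K) _)
        = ((f : ∀ _ : ℕ, K) _, (f : ∀ _ : ℕ, K) _) + ((f' : ∀ _ : ℕ, K) _, (f' : ∀ _ : ℕ, K) _)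
      from rfl, map_add]
    rfl

lemma pairl_smul (g : K × K →ₗ[ℂ] K × K) (hg : ∀ p : K × K,
      ‖(g p).1‖ ^ (2:ℕ) + ‖(g p).2‖ ^ (2:ℕ) = ‖p.1‖ ^ (2:ℕ) + ‖p.2‖ ^ (2:ℕ)) (c : ℂ) (f : L) :
    pairl ⇑g hg (c • f) = c • pairl ⇑g hg f := by
  apply lp.ext
  rw [lp.coeFn_smul]
  funext n
  show pairF (⇑g) ⇑(c • f) n = c • pairF (⇑g) ⇑f n
  unfold pairF
  split <;>
  · rw [lp.coeFn_smul]
    simp only [Pi.smul_apply]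
    rw [show (c • (f : ∀ _ : ℕ, K) _, c • (f : ∀ _ : ℕ, K) _)
        = c • ((f : ∀ _ : ℕ, K) _, (f : ∀ _ : ℕ, K) _) from rfl, map_smul]
    rfl

end AndoDilLp

/-- Schäffer–Andô style construction of a commuting isometric dilation. -/
theorem exists_commuting_dilation
    {X K : Type*} [NormedAddCommGroup X] [NormedSpace ℂ X]
    [NormedAddCommGroup K] [NormedSpace ℂ K]
    (T1 T2 : X →L[ℂ] X) (hcomm : T1 ∘L T2 = T2 ∘L T1)
    (A1 A2 : X →ₗ[ℂ] K)
    (hA1 : ∀ x, ‖A1 x‖ ^ (2:ℕ) = ‖x‖ ^ (2:ℕ) - ‖T1 x‖ ^ (2:ℕ))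
    (hA2 : ∀ x, ‖A2 x‖ ^ (2:ℕ) = ‖x‖ ^ (2:ℕ) - ‖T2 x‖ ^ (2:ℕ))
    (G G' : (K × K) →ₗ[ℂ] (K × K))
    (hGG' : ∀ p, G (G' p) = p) (hG'G : ∀ p, G' (G p) = p)
    (hG : ∀ p : K × K, ‖(G p).1‖ ^ (2:ℕ) + ‖(G p).2‖ ^ (2:ℕ) = ‖p.1‖ ^ (2:ℕ) + ‖p.2‖ ^ (2:ℕ))
    (hG' : ∀ p : K × K, ‖(G' p).1‖ ^ (2:ℕ) + ‖(G' p).2‖ ^ (2:ℕ) = ‖p.1‖ ^ (2:ℕ) + ‖p.2‖ ^ (2:ℕ))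
    (hGkey : ∀ x, G (A2 (T1 x), A1 x) = (A1 (T2 x), A2 x)) :
    ∃ V1 V2 : WithLp 2 (X × lp (fun _ : ℕ => K) 2) →L[ℂ]
        WithLp 2 (X × lp (fun _ : ℕ => K) 2),
      (∀ w, ‖V1 w‖ = ‖w‖) ∧ (∀ w, ‖V2 w‖ = ‖w‖) ∧
      V1 ∘L V2 = V2 ∘L V1 ∧
      (∀ (n1 n2 : ℕ) (x : X),
        (WithLp.ofLp (((V1 ^ n1) * (V2 ^ n2))
            (WithLp.toLp 2 (x, 0) : WithLp 2 (X × lp (fun _ : ℕ => K) 2)))).1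
          = ((T1 ^ n1) * (T2 ^ n2)) x) := by
  classical
  set L' : Type _ := ↥(lp (fun _ : ℕ => K) 2) with hL'
  set Z : Type _ := WithLp 2 (X × L') with hZ
  -- basic contractivity facts
  have hT1le : ∀ x, ‖T1 x‖ ≤ ‖x‖ := by
    intro x
    have h := hA1 x
    have h2 : (0:ℝ) ≤ ‖A1 x‖ ^ (2:ℕ) := by positivity
    nlinarith [norm_nonneg (T1 x), norm_nonneg x]
  -- the three building blocks
  set w1 : Z → Z := fun z => (WithLp.toLp 2 (T1 z.fst, consl (A1 z.fst) z.snd) : Z) with hw1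
  set w2 : Z → Z := fun z => (WithLp.toLp 2 (T2 z.fst, consl (A2 z.fst) z.snd) : Z) with hw2
  set ph : Z → Z := fun z => (WithLp.toLp 2 (z.fst, pairl ⇑G hG z.snd) : Z) with hph
  set ph' : Z → Z := fun z => (WithLp.toLp 2 (z.fst, pairl ⇑G' hG' z.snd) : Z) with hph'
  set V1f : Z → Z := fun z => w1 (ph' z) with hV1f
  set V2f : Z → Z := fun z => ph (w2 z) with hV2f
  -- inverses
  have phph' : ∀ z, ph (ph' z) = z := by
    intro z
    show (WithLp.toLp 2 (z.fst, pairl ⇑G hG (pairl ⇑G' hG' z.snd)) : Z) = z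
    have : pairl ⇑G hG (pairl ⇑G' hG' z.snd) = z.snd := by
      apply lp.ext
      exact pairF_pairF ⇑G' ⇑G hGG' ⇑(z.snd)
    rw [this]
    rfl
  have ph'ph : ∀ z, ph' (ph z) = z := by
    intro z
    show (WithLp.toLp 2 (z.fst, pairl ⇑G' hG' (pairl ⇑G hG z.snd)) : Z) = z
    have : pairl ⇑G' hG' (pairl ⇑G hG z.snd) = z.snd := by
      apply lp.ext
      exact pairF_pairF ⇑G ⇑G' hG'G ⇑(z.snd)
    rw [this]
    rfl
  -- the key intertwining identity
  have key : ∀ u : Z, w1 (w2 (ph u)) = ph (w2 (w1 u)) := by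
    intro u
    have hc : T1 (T2 u.fst) = T2 (T1 u.fst) := by
      have := congrArg (fun f : X →L[ℂ] X => f u.fst) hcomm
      simpa using this
    show (WithLp.toLp 2 (T1 (T2 u.fst), consl (A1 (T2 u.fst)) (consl (A2 u.fst) (pairl ⇑G hG u.snd))) : Z)
        = (WithLp.toLp 2 (T2 (T1 u.fst), pairl ⇑G hG (consl (A2 (T1 u.fst)) (consl (A1 u.fst) u.snd))) : Z)
    have h2 : consl (A1 (T2 u.fst)) (consl (A2 u.fst) (pairl ⇑G hG u.snd))
        = pairl ⇑G hG (consl (A2 (T1 u.fst)) (consl (A1 u.fst) u.snd)) := by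
      apply lp.ext
      show consF (A1 (T2 u.fst)) (consF (A2 u.fst) (pairF ⇑G ⇑(u.snd)))
          = pairF ⇑G (consF (A2 (T1 u.fst)) (consF (A1 u.fst) ⇑(u.snd)))
      rw [pairF_consF_consF, hGkey]
    rw [hc, h2]
  -- commutation on the level of functions
  have commf : ∀ z, V1f (V2f z) = V2f (V1f z) := by
    intro z
    show w1 (ph' (ph (w2 z))) = ph (w2 (w1 (ph' z)))
    rw [ph'ph, ← key (ph' z), phph']
  -- norms
  have normZ : ∀ z : Z, ‖z‖ ^ (2:ℕ) = ‖z.fst‖ ^ (2:ℕ) + ‖z.snd‖ ^ (2:ℕ) := fun z =>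
    WithLp.prod_norm_sq_eq_of_L2 z
  have normw1 : ∀ z, ‖w1 z‖ = ‖z‖ := by
    intro z
    refine sq_norm_inj' (norm_nonneg _) (norm_nonneg _) ?_
    rw [normZ, normZ]
    show ‖T1 z.fst‖ ^ (2:ℕ) + ‖consl (A1 z.fst) z.snd‖ ^ (2:ℕ) = _
    rw [consl_norm_sq, hA1]
    ring
  have normw2 : ∀ z, ‖w2 z‖ = ‖z‖ := by
    intro z
    refine sq_norm_inj' (norm_nonneg _) (norm_nonneg _) ?_
    rw [normZ, normZ]
    show ‖T2 z.fst‖ ^ (2:ℕ) + ‖consl (A2 z.fst) z.snd‖ ^ (2:ℕ) = _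
    rw [consl_norm_sq, hA2]
    ring
  have normph : ∀ z, ‖ph z‖ = ‖z‖ := by
    intro z
    refine sq_norm_inj' (norm_nonneg _) (norm_nonneg _) ?_
    rw [normZ, normZ]
    show ‖z.fst‖ ^ (2:ℕ) + ‖pairl ⇑G hG z.snd‖ ^ (2:ℕ) = _
    rw [pairl_norm]
  have normph' : ∀ z, ‖ph' z‖ = ‖z‖ := by
    intro z
    refine sq_norm_inj' (norm_nonneg _) (norm_nonneg _) ?_
    rw [normZ, normZ]
    show ‖z.fst‖ ^ (2:ℕ) + ‖pairl ⇑G' hG' z.snd‖ ^ (2:ℕ) = _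
    rw [pairl_norm]
  have normV1 : ∀ z, ‖V1f z‖ = ‖z‖ := fun z => (normw1 _).trans (normph' z)
  have normV2 : ∀ z, ‖V2f z‖ = ‖z‖ := fun z => (normph _).trans (normw2 z)
  -- linearity
  have w1add : ∀ z z' : Z, w1 (z + z') = w1 z + w1 z' := by
    intro z z'
    show (WithLp.toLp 2 (T1 (z.fst + z'.fst), consl (A1 (z.fst + z'.fst)) (z.snd + z'.snd)) : Z) = _
    rw [map_add, map_add, consl_add]
    rfl
  have w1smul : ∀ (c : ℂ) (z : Z), w1 (c • z) = c • w1 z := by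
    intro c z
    show (WithLp.toLp 2 (T1 (c • z.fst), consl (A1 (c • z.fst)) (c • z.snd)) : Z) = _
    rw [map_smul, map_smul, consl_smul]
    rfl
  have w2add : ∀ z z' : Z, w2 (z + z') = w2 z + w2 z' := by
    intro z z'
    show (WithLp.toLp 2 (T2 (z.fst + z'.fst), consl (A2 (z.fst + z'.fst)) (z.snd + z'.snd)) : Z) = _
    rw [map_add, map_add, consl_add]
    rfl
  have w2smul : ∀ (c : ℂ) (z : Z), w2 (c • z) = c • w2 z := by
    intro c z
    show (WithLp.toLp 2 (T2 (c • z.fst), consl (A2 (c • z.fst)) (c • z.snd)) : Z) = _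
    rw [map_smul, map_smul, consl_smul]
    rfl
  have phadd : ∀ z z' : Z, ph (z + z') = ph z + ph z' := by
    intro z z'
    show (WithLp.toLp 2 (z.fst + z'.fst, pairl ⇑G hG (z.snd + z'.snd)) : Z) = _
    rw [pairl_add]
    rfl
  have phsmul : ∀ (c : ℂ) (z : Z), ph (c • z) = c • ph z := by
    intro c z
    show (WithLp.toLp 2 (c • z.fst, pairl ⇑G hG (c • z.snd)) : Z) = _
    rw [pairl_smul]
    rfl
  have ph'add : ∀ z z' : Z, ph' (z + z') = ph' z + ph' z' := by
    intro z z'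
    show (WithLp.toLp 2 (z.fst + z'.fst, pairl ⇑G' hG' (z.snd + z'.snd)) : Z) = _
    rw [pairl_add]
    rfl
  have ph'smul : ∀ (c : ℂ) (z : Z), ph' (c • z) = c • ph' z := by
    intro c z
    show (WithLp.toLp 2 (c • z.fst, pairl ⇑G' hG' (c • z.snd)) : Z) = _
    rw [pairl_smul]
    rfl
  -- assemble continuous linear maps
  set V1l : Z →ₗ[ℂ] Z :=
    { toFun := V1f
      map_add' := fun z z' => by
        show w1 (ph' (z + z')) = w1 (ph' z) + w1 (ph' z')
        rw [ph'add, w1add]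
      map_smul' := fun c z => by
        show w1 (ph' (c • z)) = c • w1 (ph' z)
        rw [ph'smul, w1smul] } with hV1l
  set V2l : Z →ₗ[ℂ] Z :=
    { toFun := V2f
      map_add' := fun z z' => by
        show ph (w2 (z + z')) = ph (w2 z) + ph (w2 z')
        rw [w2add, phadd]
      map_smul' := fun c z => by
        show ph (w2 (c • z)) = c • ph (w2 z)
        rw [w2smul, phsmul] } with hV2l
  set V1 : Z →L[ℂ] Z := V1l.mkContinuous 1 (fun z => by rw [show V1l z = V1f z from rfl, normV1, one_mul]) with hV1
  set V2 : Z →L[ℂ] Z := V2l.mkContinuous 1 (fun z => by rw [show V2l z = V2f z from rfl, normV2, one_mul]) with hV2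
  refine ⟨V1, V2, fun w => normV1 w, fun w => normV2 w, ?_, ?_⟩
  · ext z
    show V1 (V2 z) = V2 (V1 z)
    exact commf z
  · -- compression property
    have head1 : ∀ z : Z, (V1 z).fst = T1 z.fst := fun z => rfl
    have head2 : ∀ z : Z, (V2 z).fst = T2 z.fst := fun z => rfl
    have hpow : ∀ (V : Z →L[ℂ] Z) (T : X →L[ℂ] X), (∀ z, (V z).fst = T z.fst) →
        ∀ (n : ℕ) (z : Z), ((V ^ n) z).fst = (T ^ n) z.fst := by
      intro V T h n
      induction n with
      | zero => intro z; simp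
      | succ n ih =>
        intro z
        rw [pow_succ, pow_succ, ContinuousLinearMap.mul_apply,
          ContinuousLinearMap.mul_apply, ih (V z), h z]
    intro n1 n2 x
    rw [ContinuousLinearMap.mul_apply, ContinuousLinearMap.mul_apply]
    exact (hpow V1 T1 head1 n1 _).trans (congrArg (T1 ^ n1) (hpow V2 T2 head2 n2 _))

/-- (Theorem 3.1, condition (ii), via Lemma 2.2 (iii)). Let `(T1, T2)` be commuting
contractions on a complex normed space `X` such that each `A_{Ti}` defines a norm,
realized by normed spaces `Xi` via linear bijections `ji`. If there are subspaces
`Y1, Y2` of `X1 ⊕₂ X2`, a surjective linear isometry between them, and internal direct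
2-sum decompositions `M̂1 ⊕₂ Y1 = X1 ⊕₂ X2 = M̂2 ⊕₂ Y2` where
`M̂1 = {(j1 (T2 x), j2 x)}` and `M̂2 = {(j1 x, j2 (T1 x))}`, then there is a surjective
linear isometry `S` of `X1 ⊕₂ X2` with `S (M̂1) = M̂2` and
`S (j1 (T2 x), j2 x) = (j1 x, j2 (T1 x))`; consequently `(T1, T2)` dilates to a
commuting pair of isometries on `X ⊕₂ ℓ²(ℕ, X1 ⊕₂ X2)`. -/
theorem unitary_from_complements_and_dilation
    (X : Type*) [NormedAddCommGroup X] [NormedSpace ℂ X]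
    (T1 T2 : X →L[ℂ] X) (hcomm : T1 ∘L T2 = T2 ∘L T1)
    (hT1 : ‖T1‖ ≤ 1) (hT2 : ‖T2‖ ≤ 1)
    (hdef1 : ∀ x : X, Real.sqrt (‖x‖ ^ 2 - ‖T1 x‖ ^ 2) = 0 → x = 0)
    (hdef2 : ∀ x : X, Real.sqrt (‖x‖ ^ 2 - ‖T2 x‖ ^ 2) = 0 → x = 0)
    (htri1 : ∀ x y : X,
      Real.sqrt (‖x + y‖ ^ 2 - ‖T1 (x + y)‖ ^ 2)
        ≤ Real.sqrt (‖x‖ ^ 2 - ‖T1 x‖ ^ 2) + Real.sqrt (‖y‖ ^ 2 - ‖T1 y‖ ^ 2))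
    (htri2 : ∀ x y : X,
      Real.sqrt (‖x + y‖ ^ 2 - ‖T2 (x + y)‖ ^ 2)
        ≤ Real.sqrt (‖x‖ ^ 2 - ‖T2 x‖ ^ 2) + Real.sqrt (‖y‖ ^ 2 - ‖T2 y‖ ^ 2))
    (X1 X2 : Type*) [NormedAddCommGroup X1] [NormedSpace ℂ X1]
    [NormedAddCommGroup X2] [NormedSpace ℂ X2]
    (j1 : X ≃ₗ[ℂ] X1) (j2 : X ≃ₗ[ℂ] X2)
    (hj1 : ∀ x : X, ‖j1 x‖ = Real.sqrt (‖x‖ ^ 2 - ‖T1 x‖ ^ 2))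
    (hj2 : ∀ x : X, ‖j2 x‖ = Real.sqrt (‖x‖ ^ 2 - ‖T2 x‖ ^ 2))
    (Y1 Y2 : Submodule ℂ (WithLp 2 (X1 × X2)))
    (U : Y1 ≃ₗᵢ[ℂ] Y2)
    (hdec1 : ∀ z : WithLp 2 (X1 × X2),
      ∃! p : X × Y1,
        (WithLp.equiv 2 (X1 × X2)).symm (j1 (T2 p.1), j2 p.1)
          + (p.2 : WithLp 2 (X1 × X2)) = z)
    (hnorm1 : ∀ (x : X) (y : Y1),
      ‖(WithLp.equiv 2 (X1 × X2)).symm (j1 (T2 x), j2 x) + (y : WithLp 2 (X1 × X2))‖ ^ 2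
        = ‖(WithLp.equiv 2 (X1 × X2)).symm (j1 (T2 x), j2 x)‖ ^ 2
          + ‖(y : WithLp 2 (X1 × X2))‖ ^ 2)
    (hdec2 : ∀ z : WithLp 2 (X1 × X2),
      ∃! p : X × Y2,
        (WithLp.equiv 2 (X1 × X2)).symm (j1 p.1, j2 (T1 p.1))
          + (p.2 : WithLp 2 (X1 × X2)) = z)
    (hnorm2 : ∀ (x : X) (y : Y2),
      ‖(WithLp.equiv 2 (X1 × X2)).symm (j1 x, j2 (T1 x)) + (y : WithLp 2 (X1 × X2))‖ ^ 2
        = ‖(WithLp.equiv 2 (X1 × X2)).symm (j1 x, j2 (T1 x))‖ ^ 2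
          + ‖(y : WithLp 2 (X1 × X2))‖ ^ 2) :
    ∃ S : WithLp 2 (X1 × X2) ≃ₗᵢ[ℂ] WithLp 2 (X1 × X2),
      (∀ x : X,
        S (WithLp.toLp 2 (j1 (T2 x), j2 x) : WithLp 2 (X1 × X2))
          = (WithLp.toLp 2 (j1 x, j2 (T1 x)) : WithLp 2 (X1 × X2))) ∧
      (S '' {z : WithLp 2 (X1 × X2) | ∃ x : X, z = WithLp.toLp 2 (j1 (T2 x), j2 x)}
        = {z : WithLp 2 (X1 × X2) | ∃ x : X, z = WithLp.toLp 2 (j1 x, j2 (T1 x))}) ∧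
      (∃ V1 V2 : WithLp 2 (X × lp (fun _ : ℕ => WithLp 2 (X1 × X2)) 2) →L[ℂ]
          WithLp 2 (X × lp (fun _ : ℕ => WithLp 2 (X1 × X2)) 2),
        (∀ w, ‖V1 w‖ = ‖w‖) ∧ (∀ w, ‖V2 w‖ = ‖w‖) ∧
        V1 ∘L V2 = V2 ∘L V1 ∧
        (∀ (n1 n2 : ℕ) (x : X),
          (WithLp.ofLp (((V1 ^ n1) * (V2 ^ n2))
              (WithLp.toLp 2 (x, 0) : WithLp 2 (X × lp (fun _ : ℕ => WithLp 2 (X1 × X2)) 2)))).1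
            = ((T1 ^ n1) * (T2 ^ n2)) x)) := by
  classical
  -- contractivity
  have hT1le : ∀ x : X, ‖T1 x‖ ≤ ‖x‖ := fun x =>
    (T1.le_opNorm x).trans (by nlinarith [norm_nonneg x])
  have hT2le : ∀ x : X, ‖T2 x‖ ≤ ‖x‖ := fun x =>
    (T2.le_opNorm x).trans (by nlinarith [norm_nonneg x])
  have hj1sq : ∀ x : X, ‖j1 x‖ ^ 2 = ‖x‖ ^ 2 - ‖T1 x‖ ^ 2 := by
    intro x
    rw [hj1, Real.sq_sqrt]
    nlinarith [hT1le x, norm_nonneg x, norm_nonneg (T1 x)]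
  have hj2sq : ∀ x : X, ‖j2 x‖ ^ 2 = ‖x‖ ^ 2 - ‖T2 x‖ ^ 2 := by
    intro x
    rw [hj2, Real.sq_sqrt]
    nlinarith [hT2le x, norm_nonneg x, norm_nonneg (T2 x)]
  have prodnorm : ∀ (a : X1) (b : X2),
      ‖(WithLp.equiv 2 (X1 × X2)).symm (a, b)‖ ^ 2 = ‖a‖ ^ 2 + ‖b‖ ^ 2 :=
    fun a b => WithLp.prod_norm_sq_eq_of_L2 ((WithLp.equiv 2 (X1 × X2)).symm (a, b))
  set mhat1 : X →ₗ[ℂ] WithLp 2 (X1 × X2) :=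
    (WithLp.linearEquiv 2 ℂ (X1 × X2)).symm.toLinearMap.comp
      ((j1.toLinearMap.comp (T2 : X →ₗ[ℂ] X)).prod j2.toLinearMap) with hmhat1
  set mhat2 : X →ₗ[ℂ] WithLp 2 (X1 × X2) :=
    (WithLp.linearEquiv 2 ℂ (X1 × X2)).symm.toLinearMap.comp
      (j1.toLinearMap.prod (j2.toLinearMap.comp (T1 : X →ₗ[ℂ] X))) with hmhat2
  have hcomm' : ∀ x : X, T1 (T2 x) = T2 (T1 x) := by
    intro x
    have := congrArg (fun f : X →L[ℂ] X => f x) hcomm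
    simpa using this
  have hnormeq : ∀ x : X, ‖mhat1 x‖ = ‖mhat2 x‖ := by
    intro x
    have e1 : ‖mhat1 x‖ ^ 2 = ‖j1 (T2 x)‖ ^ 2 + ‖j2 x‖ ^ 2 := prodnorm _ _
    have e2 : ‖mhat2 x‖ ^ 2 = ‖j1 x‖ ^ 2 + ‖j2 (T1 x)‖ ^ 2 := prodnorm _ _
    refine sq_norm_inj (norm_nonneg _) (norm_nonneg _) ?_
    rw [e1, e2, hj1sq, hj2sq, hj1sq, hj2sq, hcomm' x]
    ring
  -- Lemma 2.2 (iii): the isometry S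
  obtain ⟨S, hS⟩ :=
    exists_isometry_of_complements mhat1 mhat2 hnormeq Y1 Y2 U hdec1 hnorm1 hdec2 hnorm2
  have hS' : ∀ x : X,
      S ((WithLp.equiv 2 (X1 × X2)).symm (j1 (T2 x), j2 x))
        = (WithLp.equiv 2 (X1 × X2)).symm (j1 x, j2 (T1 x)) := hS
  refine ⟨S, fun x => hS x, ?_, ?_⟩
  · -- image of M̂1 is M̂2
    ext z
    simp only [Set.mem_image, Set.mem_setOf_eq]
    constructor
    · rintro ⟨w, ⟨x, rfl⟩, rfl⟩
      exact ⟨x, hS x⟩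
    · rintro ⟨x, rfl⟩
      exact ⟨mhat1 x, ⟨x, rfl⟩, hS x⟩
  · -- the dilation part
    set A1 : X →ₗ[ℂ] WithLp 2 (X1 × X2) :=
      (WithLp.linearEquiv 2 ℂ (X1 × X2)).symm.toLinearMap.comp
        (j1.toLinearMap.prod (0 : X →ₗ[ℂ] X2)) with hA1def
    set A2 : X →ₗ[ℂ] WithLp 2 (X1 × X2) :=
      (WithLp.linearEquiv 2 ℂ (X1 × X2)).symm.toLinearMap.comp
        ((0 : X →ₗ[ℂ] X1).prod j2.toLinearMap) with hA2def
    have hA1 : ∀ x, ‖A1 x‖ ^ (2:ℕ) = ‖x‖ ^ (2:ℕ) - ‖T1 x‖ ^ (2:ℕ) := by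
      intro x
      have h : ‖A1 x‖ ^ 2 = ‖j1 x‖ ^ 2 + ‖(0 : X2)‖ ^ 2 := prodnorm (j1 x) 0
      rw [h, norm_zero, hj1sq]
      ring
    have hA2 : ∀ x, ‖A2 x‖ ^ (2:ℕ) = ‖x‖ ^ (2:ℕ) - ‖T2 x‖ ^ (2:ℕ) := by
      intro x
      have h : ‖A2 x‖ ^ 2 = ‖(0 : X1)‖ ^ 2 + ‖j2 x‖ ^ 2 := prodnorm 0 (j2 x)
      rw [h, norm_zero, hj2sq]
      ring
    -- projections and injections
    set K' : Type _ := WithLp 2 (X1 × X2) with hK'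
    set ι : (X1 × X2) →ₗ[ℂ] K' := (WithLp.linearEquiv 2 ℂ (X1 × X2)).symm.toLinearMap with hι
    set π1 : K' →ₗ[ℂ] X1 :=
      (LinearMap.fst ℂ X1 X2).comp (WithLp.linearEquiv 2 ℂ (X1 × X2)).toLinearMap with hπ1
    set π2 : K' →ₗ[ℂ] X2 :=
      (LinearMap.snd ℂ X1 X2).comp (WithLp.linearEquiv 2 ℂ (X1 × X2)).toLinearMap with hπ2
    set sy : K' →ₗ[ℂ] K' := S.symm.toLinearEquiv.toLinearMap with hsy
    set sf : K' →ₗ[ℂ] K' := S.toLinearEquiv.toLinearMap with hsf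
    set fstK : (K' × K') →ₗ[ℂ] K' := LinearMap.fst ℂ K' K' with hfstK
    set sndK : (K' × K') →ₗ[ℂ] K' := LinearMap.snd ℂ K' K' with hsndK
    -- e p = S.symm (p.2.1, p.1.2)
    set eK : (K' × K') →ₗ[ℂ] K' :=
      sy.comp (ι.comp ((π1.comp sndK).prod (π2.comp fstK))) with heK
    -- f p = S (p.1.1, p.2.2)
    set fK : (K' × K') →ₗ[ℂ] K' :=
      sf.comp (ι.comp ((π1.comp fstK).prod (π2.comp sndK))) with hfK
    set Gm : (K' × K') →ₗ[ℂ] (K' × K') :=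
      (ι.comp ((π1.comp eK).prod (π2.comp sndK))).prod
        (ι.comp ((π1.comp fstK).prod (π2.comp eK))) with hGm
    set Gm' : (K' × K') →ₗ[ℂ] (K' × K') :=
      (ι.comp ((π1.comp sndK).prod (π2.comp fK))).prod
        (ι.comp ((π1.comp fK).prod (π2.comp fstK))) with hGm'
    have hGG' : ∀ p : K' × K', Gm (Gm' p) = p := by
      intro p
      show ((WithLp.equiv 2 (X1 × X2)).symm
            ((S.symm (S ((WithLp.equiv 2 (X1 × X2)).symm (p.1.fst, p.2.snd)))).fst, p.1.snd),
          (WithLp.equiv 2 (X1 × X2)).symm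
            (p.2.fst, (S.symm (S ((WithLp.equiv 2 (X1 × X2)).symm (p.1.fst, p.2.snd)))).snd)) = p
      rw [S.symm_apply_apply]
      rfl
    have hG'G : ∀ p : K' × K', Gm' (Gm p) = p := by
      intro p
      show ((WithLp.equiv 2 (X1 × X2)).symm
            (p.1.fst, (S (S.symm ((WithLp.equiv 2 (X1 × X2)).symm (p.2.fst, p.1.snd)))).snd),
          (WithLp.equiv 2 (X1 × X2)).symm
            ((S (S.symm ((WithLp.equiv 2 (X1 × X2)).symm (p.2.fst, p.1.snd)))).fst, p.2.snd)) = p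
      rw [S.apply_symm_apply]
      rfl
    have hGnorm : ∀ p : K' × K',
        ‖(Gm p).1‖ ^ (2:ℕ) + ‖(Gm p).2‖ ^ (2:ℕ) = ‖p.1‖ ^ (2:ℕ) + ‖p.2‖ ^ (2:ℕ) := by
      intro p
      have h1 : ‖(Gm p).1‖ ^ 2
          = ‖(S.symm ((WithLp.equiv 2 (X1 × X2)).symm (p.2.fst, p.1.snd))).fst‖ ^ 2
            + ‖p.2.snd‖ ^ 2 := prodnorm _ _
      have h2 : ‖(Gm p).2‖ ^ 2
          = ‖p.1.fst‖ ^ 2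
            + ‖(S.symm ((WithLp.equiv 2 (X1 × X2)).symm (p.2.fst, p.1.snd))).snd‖ ^ 2 :=
        prodnorm _ _
      have h3 : ‖S.symm ((WithLp.equiv 2 (X1 × X2)).symm (p.2.fst, p.1.snd))‖ ^ 2
          = ‖(S.symm ((WithLp.equiv 2 (X1 × X2)).symm (p.2.fst, p.1.snd))).fst‖ ^ 2
            + ‖(S.symm ((WithLp.equiv 2 (X1 × X2)).symm (p.2.fst, p.1.snd))).snd‖ ^ 2 :=
        WithLp.prod_norm_sq_eq_of_L2 _
      have h4 : ‖S.symm ((WithLp.equiv 2 (X1 × X2)).symm (p.2.fst, p.1.snd))‖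
          = ‖(WithLp.equiv 2 (X1 × X2)).symm (p.2.fst, p.1.snd)‖ := S.symm.norm_map _
      have h4' : ‖(WithLp.equiv 2 (X1 × X2)).symm (p.2.fst, p.1.snd)‖ ^ 2
          = ‖p.2.fst‖ ^ 2 + ‖p.1.snd‖ ^ 2 := prodnorm _ _
      have h5 : ‖p.1‖ ^ 2 = ‖p.1.fst‖ ^ 2 + ‖p.1.snd‖ ^ 2 := WithLp.prod_norm_sq_eq_of_L2 _
      have h6 : ‖p.2‖ ^ 2 = ‖p.2.fst‖ ^ 2 + ‖p.2.snd‖ ^ 2 := WithLp.prod_norm_sq_eq_of_L2 _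
      have h4sq : ‖S.symm ((WithLp.equiv 2 (X1 × X2)).symm (p.2.fst, p.1.snd))‖ ^ 2
          = ‖(WithLp.equiv 2 (X1 × X2)).symm (p.2.fst, p.1.snd)‖ ^ 2 := by rw [h4]
      rw [h1, h2, h5, h6]
      have := h4sq.symm.trans h3
      rw [h4'] at this
      linarith
    have hG'norm : ∀ p : K' × K',
        ‖(Gm' p).1‖ ^ (2:ℕ) + ‖(Gm' p).2‖ ^ (2:ℕ) = ‖p.1‖ ^ (2:ℕ) + ‖p.2‖ ^ (2:ℕ) := by
      intro p
      have h1 : ‖(Gm' p).1‖ ^ 2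
          = ‖p.2.fst‖ ^ 2
            + ‖(S ((WithLp.equiv 2 (X1 × X2)).symm (p.1.fst, p.2.snd))).snd‖ ^ 2 := prodnorm _ _
      have h2 : ‖(Gm' p).2‖ ^ 2
          = ‖(S ((WithLp.equiv 2 (X1 × X2)).symm (p.1.fst, p.2.snd))).fst‖ ^ 2
            + ‖p.1.snd‖ ^ 2 := prodnorm _ _
      have h3 : ‖S ((WithLp.equiv 2 (X1 × X2)).symm (p.1.fst, p.2.snd))‖ ^ 2
          = ‖(S ((WithLp.equiv 2 (X1 × X2)).symm (p.1.fst, p.2.snd))).fst‖ ^ 2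
            + ‖(S ((WithLp.equiv 2 (X1 × X2)).symm (p.1.fst, p.2.snd))).snd‖ ^ 2 :=
        WithLp.prod_norm_sq_eq_of_L2 _
      have h4 : ‖S ((WithLp.equiv 2 (X1 × X2)).symm (p.1.fst, p.2.snd))‖
          = ‖(WithLp.equiv 2 (X1 × X2)).symm (p.1.fst, p.2.snd)‖ := S.norm_map _
      have h4' : ‖(WithLp.equiv 2 (X1 × X2)).symm (p.1.fst, p.2.snd)‖ ^ 2
          = ‖p.1.fst‖ ^ 2 + ‖p.2.snd‖ ^ 2 := prodnorm _ _
      have h5 : ‖p.1‖ ^ 2 = ‖p.1.fst‖ ^ 2 + ‖p.1.snd‖ ^ 2 := WithLp.prod_norm_sq_eq_of_L2 _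
      have h6 : ‖p.2‖ ^ 2 = ‖p.2.fst‖ ^ 2 + ‖p.2.snd‖ ^ 2 := WithLp.prod_norm_sq_eq_of_L2 _
      have h4sq : ‖S ((WithLp.equiv 2 (X1 × X2)).symm (p.1.fst, p.2.snd))‖ ^ 2
          = ‖(WithLp.equiv 2 (X1 × X2)).symm (p.1.fst, p.2.snd)‖ ^ 2 := by rw [h4]
      rw [h1, h2, h5, h6]
      have := h4sq.symm.trans h3
      rw [h4'] at this
      linarith
    have hGkey : ∀ x : X, Gm (A2 (T1 x), A1 x) = (A1 (T2 x), A2 x) := by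
      intro x
      have he : S.symm ((WithLp.equiv 2 (X1 × X2)).symm (j1 x, j2 (T1 x)))
          = (WithLp.equiv 2 (X1 × X2)).symm (j1 (T2 x), j2 x) := by
        conv_lhs => rw [← hS' x]
        rw [S.symm_apply_apply]
      show ((WithLp.equiv 2 (X1 × X2)).symm
            ((S.symm ((WithLp.equiv 2 (X1 × X2)).symm (j1 x, j2 (T1 x)))).fst, (0 : X2)),
          (WithLp.equiv 2 (X1 × X2)).symm
            ((0 : X1), (S.symm ((WithLp.equiv 2 (X1 × X2)).symm (j1 x, j2 (T1 x)))).snd))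
          = (A1 (T2 x), A2 x)
      rw [he]
      rfl
    exact exists_commuting_dilation T1 T2 hcomm A1 A2 hA1 hA2 Gm Gm' hGG' hG'G
      hGnorm hG'norm hGkey
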